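/- Let λ₁, λ₂ ∈ (0,1) and let A be a 2×2 real matrix with det A = λ₁λ₂ and trace A = (1+λ₁)(1+λ₂)k - (λ₁+λ₂) for some real k ≥ 0 with k ≠ 1. Then A has no eigenvalue equal to 1 or -1. Moreover, if k > 1 then A has a real eigenvalue μ with μ > 1, and if 0 ≤ k < 1 then every (complex) eigenvalue of A has modulus strictly less than 1. -/

import Mathlib

/-- eigenvalue constraints for a 2×2 real matrix with given
determinant and trace. Eigenvalues are complex roots of
χ(x) = x² - (trace A)·x + det A. -/
theorem stmt_0 (l₁ l₂ k : ℝ) (A : Matrix (Fin 2) (Fin 2) ℝ)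
    (hl₁ : l₁ ∈ Set.Ioo (0:ℝ) 1) (hl₂ : l₂ ∈ Set.Ioo (0:ℝ) 1)
    (hk : 0 ≤ k) (hk1 : k ≠ 1)
    (hdet : A.det = l₁ * l₂)
    (htr : A.trace = (1 + l₁) * (1 + l₂) * k - (l₁ + l₂)) :
    ((1:ℂ)^2 - (A.trace : ℂ) * 1 + (A.det : ℂ) ≠ 0) ∧
    ((-1:ℂ)^2 - (A.trace : ℂ) * (-1) + (A.det : ℂ) ≠ 0) ∧
    (1 < k → ∃ μ : ℝ, 1 < μ ∧ μ^2 - A.trace * μ + A.det = 0) ∧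
    (k < 1 → ∀ z : ℂ, z^2 - (A.trace : ℂ) * z + (A.det : ℂ) = 0 →
      ‖z‖ < 1) := by
  obtain ⟨hl1a, hl1b⟩ := hl₁
  obtain ⟨hl2a, hl2b⟩ := hl₂
  set T := A.trace with hT
  set D := A.det with hDdef
  have hD0 : 0 < D := by rw [hdet]; positivity
  have hD1 : D < 1 := by rw [hdet]; nlinarith
  have hχ1 : 1 - T + D = (1 + l₁) * (1 + l₂) * (1 - k) := by rw [hdet, htr]; ring
  have hχm1 : 0 < 1 + T + D := by rw [hdet, htr]; nlinarith
  have hχ1ne : 1 - T + D ≠ 0 := by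
    rw [hχ1]
    exact mul_ne_zero (mul_ne_zero (by linarith) (by linarith))
      (sub_ne_zero.mpr (Ne.symm hk1))
  refine ⟨?_, ?_, ?_, ?_⟩
  · intro h
    apply hχ1ne
    have h2 : ((1 - T + D : ℝ) : ℂ) = 0 := by push_cast; linear_combination h
    exact_mod_cast h2
  · intro h
    have h2 : ((1 + T + D : ℝ) : ℂ) = 0 := by push_cast; linear_combination h
    have : (1 + T + D : ℝ) = 0 := by exact_mod_cast h2
    linarith
  · intro hk1'
    have hχ1neg : 1 - T + D < 0 := by
      rw [hχ1]; apply mul_neg_of_pos_of_neg; nlinarith; linarith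
    have hΔ : 0 < T^2 - 4*D := by nlinarith [sq_nonneg (T - 2)]
    set s := Real.sqrt (T^2 - 4*D) with hs
    have hs2 : s^2 = T^2 - 4*D := Real.sq_sqrt hΔ.le
    have hs0 : 0 < s := Real.sqrt_pos.mpr hΔ
    refine ⟨(T + s)/2, ?_, by nlinarith⟩
    rcases le_or_gt (2 - T) 0 with h | h
    · linarith
    · nlinarith
  · intro hklt z hz
    have hχ1pos : 0 < 1 - T + D := by
      rw [hχ1]; apply mul_pos; nlinarith; linarith
    have hzc : (starRingEnd ℂ) z ^ 2 - (T : ℂ) * (starRingEnd ℂ) z + (D : ℂ) = 0 := by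
      have := congrArg (starRingEnd ℂ) hz
      simpa using this
    have hfac : ((starRingEnd ℂ) z - z) * ((starRingEnd ℂ) z + z - (T : ℂ)) = 0 := by
      linear_combination hzc - hz
    rcases mul_eq_zero.mp hfac with h | h
    · -- z is real
      have hre : z = (z.re : ℂ) := by
        have : (starRingEnd ℂ) z = z := by linear_combination h
        exact (Complex.conj_eq_iff_re.mp this).symm
      set r := z.re with hr
      have hrr : r^2 - T * r + D = 0 := by
        have : ((r^2 - T * r + D : ℝ) : ℂ) = 0 := by push_cast; rw [← hre]; exact hz
        exact_mod_cast this
      rw [hre, Complex.norm_real, Real.norm_eq_abs, abs_lt]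
      constructor
      · nlinarith [sq_nonneg (r + 1), sq_nonneg (r - 1)]
      · nlinarith [sq_nonneg (r + 1), sq_nonneg (r - 1)]
    · -- conjugate pair
      have hmul : z * (starRingEnd ℂ) z = (D : ℂ) := by
        linear_combination -hz + z * h
      have hns : (Complex.normSq z : ℂ) = (D : ℂ) := by rw [← Complex.mul_conj]; exact hmul
      have hns' : Complex.normSq z = D := by exact_mod_cast hns
      have hsq : ‖z‖^2 = D := by rw [Complex.sq_norm]; exact hns'
      nlinarith [norm_nonneg z]
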